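/- arXiv:1904.03645 — 2 statements merged into one kernel-verified Lean document; each statement's English description precedes it below -/
import Mathlib

section
/- For every integer n ≥ 2 and every integer p with p ≥ 1 if n is even and p ≥ 0 if n is odd, one has 4·(n² + ⌊n/2⌋·(⌊n/2⌋ - n - 1) - 1 + p) - 3·n·(n - 1) ≥ n - 1. -/
theorem per_point_inequality (n p : ℤ) (hn : 2 ≤ n)
    (hpe : Even n → 1 ≤ p) (hpo : Odd n → 0 ≤ p) :
    4 * (n ^ 2 + (n / 2) * ((n / 2) - n - 1) - 1 + p) - 3 * n * (n - 1) ≥ n - 1 := by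
  rcases Int.even_or_odd n with h | h
  · obtain ⟨k, hk⟩ := h
    have hp := hpe ⟨k, hk⟩
    have h2 : n / 2 = k := by omega
    subst hk; rw [h2]; ring_nf; nlinarith
  · obtain ⟨k, hk⟩ := h
    have hp := hpo ⟨k, hk⟩
    have h2 : n / 2 = k := by omega
    subst hk; rw [h2]; ring_nf; nlinarith
end

section
/- Suppose ν₁, …, ν_N are integers with νᵢ ≥ 2 for all i, and suppose integers p₁, …, p_N satisfy pᵢ ≥ 1 when νᵢ is even and pᵢ ≥ 0 when νᵢ is odd. Set μ = Σᵢ νᵢ(νᵢ - 1) and τ = Σᵢ (νᵢ² + ⌊νᵢ/2⌋(⌊νᵢ/2⌋ - νᵢ - 1) - 1 + pᵢ). Then 4τ - 3μ ≥ Σᵢ (νᵢ - 1), and consequently (4τ - 3μ)² + (4τ - 3μ) ≥ μ, hence 4τ > 3μ whenever N ≥ 1. -/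
lemma tau_key (ν p : ℤ) (hν : 2 ≤ ν) (hpe : Even ν → 1 ≤ p) (hpo : Odd ν → 0 ≤ p) :
    ν - 1 ≤ 4 * (ν ^ 2 + (ν / 2) * (ν / 2 - ν - 1) - 1 + p) - 3 * (ν * (ν - 1)) := by
  rcases Int.even_or_odd ν with ⟨m, hm⟩ | ⟨m, hm⟩
  · have hp := hpe ⟨m, hm⟩
    have hd : ν / 2 = m := by omega
    subst hm; rw [hd]; nlinarith
  · have hp := hpo ⟨m, hm⟩
    have hd : ν / 2 = m := by omega
    subst hm; rw [hd]; nlinarith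

theorem tau_min_inequality (N : ℕ) (ν p : Fin N → ℤ)
    (hν : ∀ i, 2 ≤ ν i)
    (hpe : ∀ i, Even (ν i) → 1 ≤ p i) (hpo : ∀ i, Odd (ν i) → 0 ≤ p i)
    (μ τ : ℤ)
    (hμ : μ = ∑ i, ν i * (ν i - 1))
    (hτ : τ = ∑ i, (ν i ^ 2 + (ν i / 2) * (ν i / 2 - ν i - 1) - 1 + p i)) :
    4 * τ - 3 * μ ≥ ∑ i, (ν i - 1) ∧
    (4 * τ - 3 * μ) ^ 2 + (4 * τ - 3 * μ) ≥ μ ∧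
    (1 ≤ N → 4 * τ > 3 * μ) := by
  have h1 : (∑ i, (ν i - 1)) ≤ 4 * τ - 3 * μ := by
    rw [hμ, hτ, Finset.mul_sum, Finset.mul_sum, ← Finset.sum_sub_distrib]
    exact Finset.sum_le_sum fun i _ => tau_key (ν i) (p i) (hν i) (hpe i) (hpo i)
  set S := 4 * τ - 3 * μ with hS
  set T := ∑ i, (ν i - 1) with hT
  have hTN : (N : ℤ) ≤ T := by
    calc (N : ℤ) = ∑ _i : Fin N, (1 : ℤ) := by simp
    _ ≤ T := Finset.sum_le_sum fun i _ => by have := hν i; omega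
  have hT0 : 0 ≤ T := le_trans (by positivity) hTN
  have hsq : (∑ i, (ν i - 1) ^ 2) ≤ T ^ 2 :=
    Finset.sum_sq_le_sq_sum_of_nonneg fun i _ => by have := hν i; omega
  have hμT : μ = (∑ i, (ν i - 1) ^ 2) + T := by
    rw [hμ, hT, ← Finset.sum_add_distrib]
    exact Finset.sum_congr rfl fun i _ => by ring
  have hS2 : T ^ 2 ≤ S ^ 2 := by nlinarith
  refine ⟨h1, by nlinarith, fun hN => ?_⟩
  have : (1 : ℤ) ≤ N := by exact_mod_cast hN
  omega
end
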